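/- arXiv:2306.09125 — 4 statements merged into one kernel-verified Lean document; each statement's English description precedes it below -/
import Mathlib

section
/- Let e₀ : ℝ² → ℝ³ × ℂ be the map e₀(x, y) = ((sin(πx)·cos(2πy), cos(πx)·cos(2πy), sin(2πy)), exp(2πix)). Then for all x, y ∈ ℝ the point e₀(x, y) lies in S² × S¹ (i.e. the first component has Euclidean norm 1 in ℝ³ and the second component has absolute value 1 in ℂ), and e₀ satisfies the identities e₀(x, y + 1) = e₀(x, y) and e₀(x + 1, y) = e₀(x, 1/2 − y) for all x, y ∈ ℝ. -/
open Real

/-- The explicit parametrization of the Klein bottle inside `S² × S¹` from the paper: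
`e₀(x, y) = ((sin(πx)·cos(2πy), cos(πx)·cos(2πy), sin(2πy)), exp(2πix))`. -/
noncomputable def e₀ : ℝ × ℝ → EuclideanSpace ℝ (Fin 3) × ℂ := fun p =>
  ((WithLp.equiv 2 (Fin 3 → ℝ)).symm
      ![Real.sin (π * p.1) * Real.cos (2 * π * p.2),
        Real.cos (π * p.1) * Real.cos (2 * π * p.2),
        Real.sin (2 * π * p.2)],
    Complex.exp (2 * π * p.1 * Complex.I))

theorem e0_maps_to_sphere_times_circle_and_periodicity :
    (∀ x y : ℝ, ‖(e₀ (x, y)).1‖ = 1 ∧ ‖(e₀ (x, y)).2‖ = 1) ∧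
    (∀ x y : ℝ, e₀ (x, y + 1) = e₀ (x, y)) ∧
    (∀ x y : ℝ, e₀ (x + 1, y) = e₀ (x, 1 / 2 - y)) := by
  refine ⟨fun x y => ⟨?_, ?_⟩, fun x y => ?_, fun x y => ?_⟩
  · rw [show (1:ℝ) = Real.sqrt 1 from (Real.sqrt_one).symm,
      EuclideanSpace.norm_eq]
    congr 1
    simp [e₀, Fin.sum_univ_three, sq_abs]
    ring_nf
    nlinarith [Real.sin_sq_add_cos_sq (π * x), Real.sin_sq_add_cos_sq (π * y * 2)]
  · have : (2 * π * x * Complex.I) = (2 * π * x : ℝ) * Complex.I := by push_cast; ring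
    simp [e₀, this, Complex.norm_exp_ofReal_mul_I]
  · simp only [e₀, Prod.mk.injEq]
    constructor
    · congr 1
      ext i
      fin_cases i <;> simp [mul_add, Real.cos_add, Real.sin_add]
    · trivial
  · simp only [e₀, Prod.mk.injEq]
    constructor
    · congr 1
      ext i
      fin_cases i <;>
        simp [mul_add, mul_sub, Real.cos_add, Real.sin_add, Real.cos_sub, Real.sin_sub,
          Real.cos_pi_div_two, Real.sin_pi_div_two] <;> ring_nf <;>
        simp [Real.cos_pi_div_two, Real.sin_pi_div_two]
    · have : (2 * π * (x+1) * Complex.I) = 2 * π * x * Complex.I + 2*π*Complex.I := by ring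
      push_cast
      rw [this, Complex.exp_add, Complex.exp_two_pi_mul_I, mul_one]
end

section
/- Let e₀ : ℝ² → ℝ³ × ℂ be the map e₀(x, y) = ((sin(πx)·cos(2πy), cos(πx)·cos(2πy), sin(2πy)), exp(2πix)). Then for all (x, y), (x′, y′) ∈ ℝ² one has e₀(x, y) = e₀(x′, y′) if and only if there exist integers m, n such that x′ = x + m and y′ = (−1)^m · y + m/2 + n. In other words, the fibers of e₀ are exactly the orbits of the group of homeomorphisms of ℝ² generated by (x, y) ↦ (x, y + 1) and (x, y) ↦ (x + 1, 1/2 − y) (the deck group of the Klein bottle). -/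
open Real

lemma aux_cs {a b : ℝ} (hc : Real.cos a = Real.cos b) (hs : Real.sin a = Real.sin b) :
    ∃ k : ℤ, b = a + k * (2 * π) := by
  have h : Complex.exp (↑b * Complex.I) = Complex.exp (↑a * Complex.I) := by
    rw [Complex.exp_mul_I, Complex.exp_mul_I, ← Complex.ofReal_cos, ← Complex.ofReal_cos,
      ← Complex.ofReal_sin, ← Complex.ofReal_sin, hc, hs]
  obtain ⟨k, hk⟩ := Complex.exp_eq_exp_iff_exists_int.mp h
  refine ⟨k, ?_⟩
  have hk' : (b : ℂ) * Complex.I = ((a + k * (2 * π) : ℝ) : ℂ) * Complex.I := by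
    push_cast; linear_combination hk
  exact_mod_cast mul_right_cancel₀ Complex.I_ne_zero hk'

/-- The fibers of `e₀` are exactly the orbits of the deck group of the Klein bottle,
generated by `(x, y) ↦ (x, y + 1)` and `(x, y) ↦ (x + 1, 1/2 − y)`. -/
theorem e0_fibers_are_klein_deck_orbits (x y x' y' : ℝ) :
    e₀ (x, y) = e₀ (x', y') ↔
      ∃ m n : ℤ, x' = x + m ∧ y' = (-1 : ℝ) ^ m * y + (m : ℝ) / 2 + n := by

  have h2pi : (2 : ℝ) * π ≠ 0 := by simp [Real.pi_ne_zero]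
  have hchar : e₀ (x, y) = e₀ (x', y') ↔
      (Real.sin (π*x) * Real.cos (2*π*y) = Real.sin (π*x') * Real.cos (2*π*y') ∧
       Real.cos (π*x) * Real.cos (2*π*y) = Real.cos (π*x') * Real.cos (2*π*y') ∧
       Real.sin (2*π*y) = Real.sin (2*π*y')) ∧
      Complex.exp (2*π*x*Complex.I) = Complex.exp (2*π*x'*Complex.I) := by
    simp [e₀, Prod.ext_iff, EmbeddingLike.apply_eq_iff_eq, funext_iff, Fin.forall_fin_succ]
  rw [hchar]
  constructor
  · rintro ⟨⟨h0, h1, h2⟩, he⟩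
    obtain ⟨m, hm⟩ := Complex.exp_eq_exp_iff_exists_int.mp he.symm
    have hx' : x' = x + m := by
      have hm' : ((x' : ℂ)) * (2*π*Complex.I) = ((x + m : ℝ) : ℂ) * (2*π*Complex.I) := by
        push_cast; linear_combination hm
      have h2pi' : (2*(π:ℂ)*Complex.I) ≠ 0 := by
        simp [Complex.I_ne_zero, Real.pi_ne_zero]
      exact_mod_cast mul_right_cancel₀ h2pi' hm'
    have hsx : Real.sin (π * x') = (-1 : ℝ) ^ m * Real.sin (π * x) := by
      rw [hx', mul_add, mul_comm π (m:ℝ)]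
      exact Real.sin_add_int_mul_pi _ m
    have hcx : Real.cos (π * x') = (-1 : ℝ) ^ m * Real.cos (π * x) := by
      rw [hx', mul_add, mul_comm π (m:ℝ)]
      exact Real.cos_add_int_mul_pi _ m
    rw [hsx] at h0; rw [hcx] at h1
    have hpy := Real.sin_sq_add_cos_sq (π * x)
    have hcy : Real.cos (2*π*y) = (-1 : ℝ) ^ m * Real.cos (2*π*y') := by
      linear_combination Real.sin (π*x) * h0 + Real.cos (π*x) * h1
        - (Real.cos (2*π*y) - (-1:ℝ)^m * Real.cos (2*π*y')) * hpy
    rcases Int.even_or_odd m with hev | hod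
    · obtain ⟨j, hj⟩ := hev
      have hpow : ((-1 : ℝ) ^ m) = 1 := Even.neg_one_zpow ⟨j, hj⟩
      rw [hpow, one_mul] at hcy
      obtain ⟨k, hk⟩ := aux_cs hcy h2
      have hy : y' = y + k := by
        apply mul_left_cancel₀ h2pi
        linear_combination hk
      exact ⟨m, k - j, hx', by rw [hpow, one_mul, hy, hj]; push_cast; ring⟩
    · obtain ⟨j, hj⟩ := hod
      have hpow : ((-1 : ℝ) ^ m) = -1 := Odd.neg_one_zpow ⟨j, hj⟩
      rw [hpow] at hcy
      have hc2 : Real.cos (π - 2*π*y) = Real.cos (2*π*y') := by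
        rw [Real.cos_pi_sub]; linarith [hcy]
      have hs2 : Real.sin (π - 2*π*y) = Real.sin (2*π*y') := by
        rw [Real.sin_pi_sub]; exact h2
      obtain ⟨k, hk⟩ := aux_cs hc2 hs2
      have hy : y' = -y + 1/2 + k := by
        apply mul_left_cancel₀ h2pi
        linear_combination hk
      exact ⟨m, k - j, hx', by rw [hpow, hy, hj]; push_cast; ring⟩
  · rintro ⟨m, n, hx', hy'⟩
    have hexp : Complex.exp (2*π*x*Complex.I) = Complex.exp (2*π*x'*Complex.I) := by
      apply Complex.exp_eq_exp_iff_exists_int.mpr ⟨-m, ?_⟩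
      rw [hx']; push_cast; ring
    have hxe : π * x' = π * x + (m : ℤ) * π := by rw [hx']; ring
    rcases Int.even_or_odd m with hev | hod
    · obtain ⟨j, hj⟩ := hev
      have hpow : ((-1 : ℝ) ^ m) = 1 := Even.neg_one_zpow ⟨j, hj⟩
      have hye : 2*π*y' = 2*π*y + ((j + n : ℤ) : ℝ) * (2*π) := by
        rw [hy', hpow, hj]; push_cast; ring
      have hsx : Real.sin (π*x') = Real.sin (π*x) := by
        rw [hxe, Real.sin_add_int_mul_pi, hpow, one_mul]
      have hcx : Real.cos (π*x') = Real.cos (π*x) := by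
        rw [hxe, Real.cos_add_int_mul_pi, hpow, one_mul]
      have hsy : Real.sin (2*π*y') = Real.sin (2*π*y) := by
        rw [hye, Real.sin_add_int_mul_two_pi]
      have hcy : Real.cos (2*π*y') = Real.cos (2*π*y) := by
        rw [hye, Real.cos_add_int_mul_two_pi]
      exact ⟨⟨by rw [hsx, hcy], by rw [hcx, hcy], by rw [hsy]⟩, hexp⟩
    · obtain ⟨j, hj⟩ := hod
      have hpow : ((-1 : ℝ) ^ m) = -1 := Odd.neg_one_zpow ⟨j, hj⟩
      have hye : 2*π*y' = (π - 2*π*y) + ((j + n : ℤ) : ℝ) * (2*π) := by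
        rw [hy', hpow, hj]; push_cast; ring
      have hsx : Real.sin (π*x') = -Real.sin (π*x) := by
        rw [hxe, Real.sin_add_int_mul_pi, hpow]; ring
      have hcx : Real.cos (π*x') = -Real.cos (π*x) := by
        rw [hxe, Real.cos_add_int_mul_pi, hpow]; ring
      have hsy : Real.sin (2*π*y') = Real.sin (2*π*y) := by
        rw [hye, Real.sin_add_int_mul_two_pi, Real.sin_pi_sub]
      have hcy : Real.cos (2*π*y') = -Real.cos (2*π*y) := by
        rw [hye, Real.cos_add_int_mul_two_pi, Real.cos_pi_sub]
      exact ⟨⟨by rw [hsx, hcy]; ring, by rw [hcx, hcy]; ring, by rw [hsy]⟩, hexp⟩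
end

section
/- Let e₀ : ℝ² → ℝ³ × ℂ be the map e₀(x, y) = ((sin(πx)·cos(2πy), cos(πx)·cos(2πy), sin(2πy)), exp(2πix)), and let K denote the quotient topological space of ℝ² by the equivalence relation whose classes are the orbits of the group generated by (x, y) ↦ (x, y + 1) and (x, y) ↦ (x + 1, 1/2 − y). Then K is compact, and the map ē₀ : K → S² × S¹ induced by e₀ on the quotient is well defined, continuous, injective, and is a topological embedding onto its image K₀ = e₀(ℝ²). -/
open Real

/-- The relation on `ℝ²` generated by the two deck transformations
`(x, y) ↦ (x, y + 1)` and `(x, y) ↦ (x + 1, 1/2 − y)`. Its equivalence closure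
(as used by `Quot`) has the orbits of the group generated by these two
homeomorphisms as its classes. -/
def kleinRel (p q : ℝ × ℝ) : Prop :=
  q = (p.1, p.2 + 1) ∨ q = (p.1 + 1, 1 / 2 - p.2)

/-- The Klein bottle: the quotient of `ℝ²` by the orbits of the group generated by
`(x, y) ↦ (x, y + 1)` and `(x, y) ↦ (x + 1, 1/2 − y)`. -/
def KleinBottle : Type := Quot kleinRel

instance : TopologicalSpace KleinBottle := instTopologicalSpaceQuot

namespace KleinAux

local notation "mk" => Quot.mk kleinRel

lemma mk_shift_y (x y : ℝ) : mk (x, y + 1) = mk (x, y) :=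
  (Quot.sound (show kleinRel (x, y) (x, y + 1) from Or.inl rfl)).symm

lemma mk_flip (x y : ℝ) : mk (x + 1, 1 / 2 - y) = mk (x, y) :=
  (Quot.sound (show kleinRel (x, y) (x + 1, 1 / 2 - y) from Or.inr rfl)).symm

lemma mk_shift_y_int (x y : ℝ) (k : ℤ) : mk (x, y + k) = mk (x, y) := by
  induction k using Int.induction_on with
  | zero => simp
  | succ n ih =>
    have : ((n : ℤ) + 1 : ℤ) = ((n : ℝ) + 1 : ℝ) := by push_cast; ring
    push_cast
    rw [show y + ((n : ℝ) + 1) = (y + n) + 1 by ring, mk_shift_y]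
    push_cast at ih; exact ih
  | pred n ih =>
    push_cast
    have := mk_shift_y x (y + (-(n : ℝ) - 1))
    rw [show y + (-(n : ℝ) - 1) + 1 = y + -(n:ℝ) by ring] at this
    push_cast at ih
    rw [← this]; exact ih

lemma mk_shift_x2 (x y : ℝ) : mk (x + 2, y) = mk (x, y) := by
  have h1 := mk_flip x y
  have h2 := mk_flip (x + 1) (1 / 2 - y)
  rw [show (1:ℝ)/2 - (1/2 - y) = y by ring, show x + 1 + 1 = x + 2 by ring] at h2
  rw [h2, h1]

lemma mk_shift_x2_int (x y : ℝ) (k : ℤ) : mk (x + 2 * k, y) = mk (x, y) := by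
  induction k using Int.induction_on with
  | zero => simp
  | succ n ih =>
    push_cast at ih ⊢
    rw [show x + 2 * ((n:ℝ) + 1) = (x + 2 * n) + 2 by ring, mk_shift_x2, ih]
  | pred n ih =>
    push_cast at ih ⊢
    have := mk_shift_x2 (x + 2 * (-(n:ℝ) - 1)) y
    rw [show x + 2 * (-(n:ℝ) - 1) + 2 = x + 2 * (-(n:ℝ)) by ring] at this
    rw [← this, ih]

/-- e₀ respects the relation. -/
lemma e₀_respects : ∀ p q : ℝ × ℝ, kleinRel p q → e₀ p = e₀ q := by
  rintro ⟨x, y⟩ q (rfl | rfl)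
  · refine Prod.ext ?_ rfl
    simp only [e₀]
    congr 1
    funext i
    fin_cases i <;>
      simp [mul_add, Real.cos_add, Real.sin_add, Real.cos_two_pi, Real.sin_two_pi]
  · refine Prod.ext ?_ ?_
    · simp only [e₀]
      congr 1
      funext i
      fin_cases i <;>
        · simp only [Matrix.cons_val_zero, Matrix.cons_val_one, Matrix.head_cons,
            Matrix.cons_val_two, Matrix.tail_cons]
          rw [show π * (x + 1) = π * x + π by ring,
            show 2 * π * (1 / 2 - y) = π - 2 * π * y by ring]
          simp [Real.sin_add, Real.cos_add, Real.sin_pi_sub, Real.cos_pi_sub]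
          try ring
    · simp only [e₀]
      rw [show (2 : ℂ) * π * ((x + 1 : ℝ) : ℂ) * Complex.I
          = 2 * π * (x : ℝ) * Complex.I + 2 * π * Complex.I by push_cast; ring,
        Complex.exp_add, Complex.exp_two_pi_mul_I, mul_one]

lemma cos_sin_eq (a b : ℝ) (hc : Real.cos a = Real.cos b) (hs : Real.sin a = Real.sin b) :
    ∃ n : ℤ, a = b + n * (2 * π) := by
  have h : Complex.exp (a * Complex.I) = Complex.exp (b * Complex.I) := by
    rw [Complex.exp_mul_I, Complex.exp_mul_I]
    rw [show (a : ℂ) = ((a : ℝ) : ℂ) from rfl, show (b : ℂ) = ((b : ℝ) : ℂ) from rfl]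
    rw [← Complex.ofReal_cos, ← Complex.ofReal_cos, ← Complex.ofReal_sin, ← Complex.ofReal_sin,
      hc, hs]
  rw [Complex.exp_eq_exp_iff_exists_int] at h
  obtain ⟨n, hn⟩ := h
  refine ⟨n, ?_⟩
  have : ((a : ℂ)) = b + n * (2 * π) := by
    have hI : ((a : ℂ)) * Complex.I = ((b : ℝ) + n * (2 * π) : ℝ) * Complex.I := by
      push_cast; rw [hn]; ring
    have := mul_right_cancel₀ Complex.I_ne_zero hI
    push_cast at this ⊢; exact this
  exact_mod_cast this

lemma surj_square (p : ℝ × ℝ) :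
    ∃ q ∈ Set.Icc (0:ℝ) 1 ×ˢ Set.Icc (0:ℝ) 1, mk q = mk p := by
  obtain ⟨x, y⟩ := p
  -- first reduce x modulo 2
  set m : ℤ := ⌊x / 2⌋ with hm
  set x' : ℝ := x - 2 * m with hx'
  have hx'0 : 0 ≤ x' := by
    have := Int.sub_one_lt_floor (x / 2)
    have h2 := Int.floor_le (x / 2)
    rw [hx']; linarith
  have hx'2 : x' < 2 := by
    have := Int.lt_floor_add_one (x / 2)
    rw [hx']; linarith
  have hxeq : mk (x', y) = mk (x, y) := by
    have := mk_shift_x2_int x' y m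
    rw [show x' + 2 * (m : ℝ) = x by rw [hx']; ring] at this
    exact this.symm
  -- helper to reduce y
  have reduce_y : ∀ (a b : ℝ), ∃ b' ∈ Set.Icc (0:ℝ) 1, mk (a, b') = mk (a, b) := by
    intro a b
    refine ⟨Int.fract b, ⟨(Int.fract_nonneg b), (Int.fract_lt_one b).le⟩, ?_⟩
    have := mk_shift_y_int a (Int.fract b) ⌊b⌋
    rw [show Int.fract b + (⌊b⌋ : ℝ) = b by rw [Int.fract]; ring] at this
    exact this.symm
  by_cases hle : x' ≤ 1
  · obtain ⟨y', hy', hmk⟩ := reduce_y x' y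
    exact ⟨(x', y'), ⟨⟨hx'0, hle⟩, hy'⟩, by rw [hmk, hxeq]⟩
  · push_neg at hle
    have hflip : mk (x' - 1, 1 / 2 - y) = mk (x', y) := by
      have := mk_flip (x' - 1) (1 / 2 - y)
      rw [show x' - 1 + 1 = x' by ring, show (1:ℝ) / 2 - (1 / 2 - y) = y by ring] at this
      exact this.symm
    obtain ⟨y', hy', hmk⟩ := reduce_y (x' - 1) (1 / 2 - y)
    exact ⟨(x' - 1, y'), ⟨⟨show (0:ℝ) ≤ x' - 1 by linarith, show x' - 1 ≤ 1 by linarith⟩, hy'⟩,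
      by rw [hmk, hflip, hxeq]⟩

lemma e₀_cont : Continuous e₀ := by
  unfold e₀
  refine Continuous.prodMk (Continuous.comp ?_ ?_) ?_
  · exact PiLp.continuous_toLp 2 (fun _ : Fin 3 => ℝ)
  · refine continuous_pi fun i => ?_
    fin_cases i <;> simp <;> fun_prop
  · fun_prop

lemma inj_aux {p q : ℝ × ℝ} (h : e₀ p = e₀ q) : mk p = mk q := by
  have h2 : Complex.exp (2 * π * p.1 * Complex.I) = Complex.exp (2 * π * q.1 * Complex.I) :=
    congrArg Prod.snd h
  rw [Complex.exp_eq_exp_iff_exists_int] at h2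
  obtain ⟨n, hn⟩ := h2
  have hp1 : p.1 = q.1 + n := by
    have hI : ((p.1 : ℝ) : ℂ) * (2 * π * Complex.I)
        = ((q.1 + n : ℝ) : ℂ) * (2 * π * Complex.I) := by
      push_cast; rw [show (p.1:ℂ) * (2 * ↑π * Complex.I) = 2 * ↑π * ↑p.1 * Complex.I by ring, hn]
      ring
    have hne : (2 * (π:ℂ) * Complex.I) ≠ 0 := by
      simp [Real.pi_ne_zero, Complex.I_ne_zero]
    have := mul_right_cancel₀ hne hI
    exact_mod_cast this
  have h1 : ((WithLp.equiv 2 (Fin 3 → ℝ)).symm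
      ![Real.sin (π * p.1) * Real.cos (2 * π * p.2),
        Real.cos (π * p.1) * Real.cos (2 * π * p.2),
        Real.sin (2 * π * p.2)] : EuclideanSpace ℝ (Fin 3))
      = (WithLp.equiv 2 (Fin 3 → ℝ)).symm
      ![Real.sin (π * q.1) * Real.cos (2 * π * q.2),
        Real.cos (π * q.1) * Real.cos (2 * π * q.2),
        Real.sin (2 * π * q.2)] := congrArg Prod.fst h
  have hv := (WithLp.equiv 2 (Fin 3 → ℝ)).symm.injective h1
  have e0 : Real.sin (π * p.1) * Real.cos (2 * π * p.2)
      = Real.sin (π * q.1) * Real.cos (2 * π * q.2) := congrFun hv 0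
  have e1 : Real.cos (π * p.1) * Real.cos (2 * π * p.2)
      = Real.cos (π * q.1) * Real.cos (2 * π * q.2) := congrFun hv 1
  have e2 : Real.sin (2 * π * p.2) = Real.sin (2 * π * q.2) := congrFun hv 2
  have hsin : Real.sin (π * p.1) = (-1) ^ n * Real.sin (π * q.1) := by
    rw [hp1, show π * (q.1 + n) = π * q.1 + n * π by push_cast; ring,
      Real.sin_add_int_mul_pi]
  have hcos : Real.cos (π * p.1) = (-1) ^ n * Real.cos (π * q.1) := by
    rw [hp1, show π * (q.1 + n) = π * q.1 + n * π by push_cast; ring,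
      Real.cos_add_int_mul_pi]
  have hpyth := Real.sin_sq_add_cos_sq (π * q.1)
  rcases Int.even_or_odd n with ⟨m, hnm⟩ | ⟨m, hnm⟩
  · have hpow : ((-1 : ℝ)) ^ n = 1 := by
      rw [hnm, show m + m = 2 * m by ring, zpow_mul]; norm_num
    rw [hpow, one_mul] at hsin hcos
    rw [hsin] at e0
    rw [hcos] at e1
    have hcc : Real.cos (2 * π * p.2) = Real.cos (2 * π * q.2) := by
      linear_combination Real.sin (π * q.1) * e0 + Real.cos (π * q.1) * e1
        + (Real.cos (2 * π * q.2) - Real.cos (2 * π * p.2)) * hpyth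
    obtain ⟨k, hk⟩ := cos_sin_eq _ _ hcc e2
    have hp2 : p.2 = q.2 + k := by
      have : 2 * π * p.2 = 2 * π * (q.2 + k) := by rw [hk]; push_cast; ring
      have h2pi : (2 * π) ≠ 0 := by positivity
      exact mul_left_cancel₀ h2pi this
    have hpeq : p = (q.1 + 2 * (m : ℝ), q.2 + (k : ℝ)) := by
      rw [Prod.ext_iff]
      constructor
      · rw [hp1, hnm]; push_cast; ring
      · exact hp2
    rw [hpeq, mk_shift_y_int, mk_shift_x2_int]
  · have hpow : ((-1 : ℝ)) ^ n = -1 := by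
      rw [hnm, zpow_add_one₀ (by norm_num : (-1:ℝ) ≠ 0), zpow_mul]; norm_num
    rw [hpow] at hsin hcos
    rw [hsin] at e0
    rw [hcos] at e1
    have hcc : Real.cos (2 * π * p.2) = Real.cos (π - 2 * π * q.2) := by
      rw [Real.cos_pi_sub]
      linear_combination (-Real.sin (π * q.1)) * e0 + (-Real.cos (π * q.1)) * e1
        - (Real.cos (2 * π * p.2) + Real.cos (2 * π * q.2)) * hpyth
    have hss : Real.sin (2 * π * p.2) = Real.sin (π - 2 * π * q.2) := by
      rw [Real.sin_pi_sub]; exact e2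
    obtain ⟨k, hk⟩ := cos_sin_eq _ _ hcc hss
    have hp2 : p.2 = 1 / 2 - q.2 + k := by
      have : 2 * π * p.2 = 2 * π * (1 / 2 - q.2 + k) := by rw [hk]; push_cast; ring
      have h2pi : (2 * π) ≠ 0 := by positivity
      exact mul_left_cancel₀ h2pi this
    have hpeq : p = ((q.1 + 1) + 2 * (m : ℝ), (1 / 2 - q.2) + (k : ℝ)) := by
      rw [Prod.ext_iff]
      constructor
      · rw [hp1, hnm]; push_cast; ring
      · exact hp2
    rw [hpeq, mk_shift_y_int, mk_shift_x2_int, mk_flip]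

end KleinAux

theorem klein_bottle_compact_and_e0_descends_to_embedding :
    CompactSpace KleinBottle ∧
    ∃ ebar : KleinBottle → EuclideanSpace ℝ (Fin 3) × ℂ,
      (∀ p : ℝ × ℝ, ebar (Quot.mk kleinRel p) = e₀ p) ∧
      (∀ q : KleinBottle, ‖(ebar q).1‖ = 1 ∧ ‖(ebar q).2‖ = 1) ∧
      Continuous ebar ∧ Function.Injective ebar ∧ Topology.IsEmbedding ebar ∧
      Set.range ebar = e₀ '' Set.univ := by
  classical
  have hcompact : CompactSpace KleinBottle := by
    refine ⟨?_⟩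
    have himg : (Set.univ : Set KleinBottle)
        = Quot.mk kleinRel '' (Set.Icc (0:ℝ) 1 ×ˢ Set.Icc (0:ℝ) 1) := by
      ext z
      simp only [Set.mem_univ, true_iff, Set.mem_image]
      induction z using Quot.ind with
      | _ p =>
        obtain ⟨q, hq, hmk⟩ := KleinAux.surj_square p
        exact ⟨q, hq, hmk⟩
    rw [himg]
    exact ((isCompact_Icc.prod isCompact_Icc).image continuous_quot_mk)
  refine ⟨hcompact, Quot.lift e₀ KleinAux.e₀_respects, fun p => rfl, ?_, ?_, ?_, ?_, ?_⟩
  · intro q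
    induction q using Quot.ind with
    | _ p =>
      constructor
      · show ‖(e₀ p).1‖ = 1
        rw [EuclideanSpace.norm_eq, Real.sqrt_eq_one]
        simp only [e₀]
        rw [Fin.sum_univ_three]
        show ‖Real.sin (π * p.1) * Real.cos (2 * π * p.2)‖ ^ 2
            + ‖Real.cos (π * p.1) * Real.cos (2 * π * p.2)‖ ^ 2
            + ‖Real.sin (2 * π * p.2)‖ ^ 2 = 1
        simp only [Real.norm_eq_abs, sq_abs]
        nlinarith [Real.sin_sq_add_cos_sq (π * p.1), Real.sin_sq_add_cos_sq (2 * π * p.2)]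
      · show ‖Complex.exp (2 * π * p.1 * Complex.I)‖ = 1
        rw [show ((2:ℂ) * π * p.1) = ((2 * π * p.1 : ℝ) : ℂ) by push_cast; ring]
        exact Complex.norm_exp_ofReal_mul_I _
  · exact continuous_quot_lift _ KleinAux.e₀_cont
  · intro a b hab
    induction a using Quot.ind with
    | _ p =>
      induction b using Quot.ind with
      | _ q => exact KleinAux.inj_aux hab
  · refine Continuous.isClosedEmbedding ?_ ?_ |>.toIsEmbedding
    · exact continuous_quot_lift _ KleinAux.e₀_cont
    · intro a b hab
      induction a using Quot.ind with
      | _ p =>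
        induction b using Quot.ind with
        | _ q => exact KleinAux.inj_aux hab
  · exact (Set.range_quot_lift (f := e₀) _).trans Set.image_univ.symm
end

section
/- Let X be a topological space and φ : X → X a homeomorphism, and let ℤ act on X × ℝ by n · (x, s) = (φⁿ(x), s − n). Then the natural projection v_φ : X × ℝ → (X × ℝ)/ℤ onto the orbit-space quotient (with the quotient topology) is a covering map. -/
/-- The deck action of `ℤ` on `X × ℝ` associated with a homeomorphism `φ` of `X`:
`n · (x, s) = (φⁿ(x), s − n)`. -/
def suspAct {X : Type*} [TopologicalSpace X] (φ : X ≃ₜ X) (n : ℤ) (p : X × ℝ) : X × ℝ :=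
  ((φ.toEquiv ^ n) p.1, p.2 - n)

/-- The orbit relation of the `ℤ`-action `n · (x, s) = (φⁿ(x), s − n)` on `X × ℝ`. -/
def suspRel {X : Type*} [TopologicalSpace X] (φ : X ≃ₜ X) (p q : X × ℝ) : Prop :=
  ∃ n : ℤ, q = suspAct φ n p

/-- The suspension (mapping torus) `Π_φ = (X × ℝ)/ℤ` of a homeomorphism `φ`. -/
def SuspSpace {X : Type*} [TopologicalSpace X] (φ : X ≃ₜ X) : Type _ :=
  Quot (suspRel φ)

instance {X : Type*} [TopologicalSpace X] (φ : X ≃ₜ X) : TopologicalSpace (SuspSpace φ) :=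
  instTopologicalSpaceQuot

namespace SuspAux

variable {X : Type*} [TopologicalSpace X] (φ : X ≃ₜ X)

theorem suspAct_add (m n : ℤ) (p : X × ℝ) :
    suspAct φ m (suspAct φ n p) = suspAct φ (m + n) p := by
  unfold suspAct
  refine Prod.ext ?_ ?_
  · simp [← Equiv.Perm.mul_apply, ← zpow_add]
  · push_cast
    ring

theorem suspAct_zero (p : X × ℝ) : suspAct φ 0 p = p := by
  simp [suspAct]

theorem suspRel_equivalence : Equivalence (suspRel φ) where
  refl p := ⟨0, (suspAct_zero φ p).symm⟩
  symm := by
    rintro p q ⟨n, rfl⟩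
    exact ⟨-n, by rw [suspAct_add, neg_add_cancel, suspAct_zero]⟩
  trans := by
    rintro p q r ⟨n, rfl⟩ ⟨m, rfl⟩
    exact ⟨m + n, suspAct_add φ m n p⟩

theorem quot_eq_iff (p q : X × ℝ) :
    Quot.mk (suspRel φ) p = Quot.mk (suspRel φ) q ↔ suspRel φ p q :=
  Quot.eq.trans (suspRel_equivalence φ).eqvGen_iff

theorem continuous_zpow (n : ℤ) : Continuous ⇑(φ.toEquiv ^ n) := by
  induction n using Int.induction_on with
  | zero => simpa using continuous_id
  | succ k ih =>
      rw [zpow_add_one]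
      have : ⇑(φ.toEquiv ^ (k : ℤ) * φ.toEquiv) = ⇑(φ.toEquiv ^ (k : ℤ)) ∘ ⇑φ.toEquiv := by
        ext x; simp [Equiv.Perm.mul_apply]
      rw [this]
      exact ih.comp φ.continuous
  | pred k ih =>
      rw [zpow_sub_one]
      have : ⇑(φ.toEquiv ^ (-(k : ℤ)) * φ.toEquiv⁻¹)
          = ⇑(φ.toEquiv ^ (-(k : ℤ))) ∘ ⇑φ.symm.toEquiv := by
        ext x; simp [Equiv.Perm.mul_apply, Equiv.Perm.inv_def]
      rw [this]
      exact ih.comp φ.symm.continuous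

/-- `suspAct φ n` as a homeomorphism. -/
def actHomeo (n : ℤ) : (X × ℝ) ≃ₜ (X × ℝ) where
  toFun := suspAct φ n
  invFun := suspAct φ (-n)
  left_inv p := by rw [suspAct_add, neg_add_cancel, suspAct_zero]
  right_inv p := by rw [suspAct_add, add_neg_cancel, suspAct_zero]
  continuous_toFun :=
    ((continuous_zpow φ n).comp continuous_fst).prodMk (continuous_snd.sub continuous_const)
  continuous_invFun :=
    ((continuous_zpow φ (-n)).comp continuous_fst).prodMk (continuous_snd.sub continuous_const)

theorem isOpenMap_quot : IsOpenMap (Quot.mk (suspRel φ)) := by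
  intro W hW
  rw [← isQuotientMap_quot_mk.isOpen_preimage]
  have : Quot.mk (suspRel φ) ⁻¹' (Quot.mk (suspRel φ) '' W)
      = ⋃ n : ℤ, suspAct φ n '' W := by
    ext p
    simp only [Set.mem_preimage, Set.mem_image, Set.mem_iUnion]
    constructor
    · rintro ⟨w, hw, hvw⟩
      obtain ⟨n, rfl⟩ := (quot_eq_iff φ w p).mp hvw
      exact ⟨n, w, hw, rfl⟩
    · rintro ⟨n, w, hw, rfl⟩
      exact ⟨w, hw, ((quot_eq_iff φ w _).mpr ⟨n, rfl⟩)⟩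
  rw [this]
  exact isOpen_iUnion fun n => (actHomeo φ n).isOpenMap W hW

theorem round_eq_of {x : ℝ} {n : ℤ} (h : x ∈ Set.Ioo ((n : ℝ) - 2⁻¹) ((n : ℝ) + 2⁻¹)) :
    round x = n := by
  rw [round_eq, Int.floor_eq_iff]
  obtain ⟨h1, h2⟩ := h
  constructor <;> push_cast <;> linarith

section Triv

variable (s₀ : ℝ)

/-- The fundamental slice around height `s₀`. -/
def slice : Set (X × ℝ) := (Set.univ : Set X) ×ˢ Set.Ioo (s₀ - 2⁻¹) (s₀ + 2⁻¹)

theorem mem_slice_iff (p : X × ℝ) :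
    p ∈ slice (X := X) s₀ ↔ s₀ - 2⁻¹ < p.2 ∧ p.2 < s₀ + 2⁻¹ := by
  simp [slice, Set.mem_prod, and_assoc]

theorem isOpen_slice : IsOpen (slice (X := X) s₀) := isOpen_univ.prod isOpen_Ioo

theorem injOn_slice : Set.InjOn (Quot.mk (suspRel φ)) (slice s₀) := by
  rintro p hp q hq hpq
  obtain ⟨n, rfl⟩ := (quot_eq_iff φ p q).mp hpq
  rw [mem_slice_iff] at hp hq
  have hq2 : s₀ - 2⁻¹ < p.2 - n ∧ p.2 - n < s₀ + 2⁻¹ := hq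
  have h1 : (-1 : ℝ) < (n : ℝ) := by linarith [hp.1, hp.2, hq2.1, hq2.2]
  have h2 : (n : ℝ) < 1 := by linarith [hp.1, hp.2, hq2.1, hq2.2]
  have h1' : (-1 : ℤ) < n := by exact_mod_cast h1
  have h2' : n < (1 : ℤ) := by exact_mod_cast h2
  have hn : n = 0 := by omega
  rw [hn, suspAct_zero]

theorem quot_suspAct (n : ℤ) (p : X × ℝ) :
    Quot.mk (suspRel φ) (suspAct φ n p) = Quot.mk (suspRel φ) p :=
  ((quot_eq_iff φ p _).mpr ⟨n, rfl⟩).symm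

theorem mem_image_slice_iff (p : X × ℝ) :
    Quot.mk (suspRel φ) p ∈ Quot.mk (suspRel φ) '' slice s₀ ↔
      ∃ n : ℤ, suspAct φ n p ∈ slice s₀ := by
  constructor
  · rintro ⟨q, hq, hvq⟩
    obtain ⟨n, rfl⟩ := (quot_eq_iff φ p q).mp hvq.symm
    exact ⟨n, hq⟩
  · rintro ⟨n, hn⟩
    exact ⟨_, hn, quot_suspAct φ n p⟩

theorem key_round {p : X × ℝ} {m : ℤ} (hm : suspAct φ m p ∈ slice s₀) :
    round (s₀ - p.2) = -m := by
  rw [mem_slice_iff] at hm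
  have hm2 : s₀ - 2⁻¹ < p.2 - m ∧ p.2 - m < s₀ + 2⁻¹ := hm
  apply round_eq_of
  constructor <;> push_cast <;> [linarith [hm2.2]; linarith [hm2.1]]

/-- The restriction of the projection to the slice. -/
def vS : ↥(slice (X := X) s₀) → SuspSpace φ := fun p => Quot.mk (suspRel φ) (p : X × ℝ)

theorem range_vS : Set.range (vS φ s₀) = Quot.mk (suspRel φ) '' slice s₀ := by
  have : vS φ s₀ = (Quot.mk (suspRel φ)) ∘ (Subtype.val) := rfl
  rw [this]; exact (Set.range_comp _ _).trans (congrArg _ Subtype.range_val)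

theorem isOpenEmbedding_vS : Topology.IsOpenEmbedding (vS φ s₀) :=
  Topology.IsOpenEmbedding.of_continuous_injective_isOpenMap
    (continuous_quot_mk.comp continuous_subtype_val)
    (fun p q h => Subtype.ext (injOn_slice φ s₀ p.2 q.2 h))
    ((isOpenMap_quot φ).comp (isOpen_slice s₀).isOpenMap_subtype_val)

variable [Nonempty X]

instance : Nonempty ↥(slice (X := X) s₀) :=
  ⟨⟨(Classical.arbitrary X, s₀), by rw [mem_slice_iff]; constructor <;> norm_num⟩⟩

/-- A section of the projection over the image of the slice. -/
noncomputable def sec : SuspSpace φ → X × ℝ := fun u =>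
  ((Topology.IsOpenEmbedding.toOpenPartialHomeomorph (vS φ s₀) (isOpenEmbedding_vS φ s₀)).symm u :
    X × ℝ)

theorem sec_mem (u : SuspSpace φ) : sec φ s₀ u ∈ slice s₀ :=
  (((Topology.IsOpenEmbedding.toOpenPartialHomeomorph (vS φ s₀) (isOpenEmbedding_vS φ s₀)).symm u)).2

theorem sec_quot {p : X × ℝ} (hp : p ∈ slice s₀) :
    sec φ s₀ (Quot.mk (suspRel φ) p) = p := by
  have := (isOpenEmbedding_vS φ s₀).toOpenPartialHomeomorph_left_inv (f := vS φ s₀)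
    (x := (⟨p, hp⟩ : ↥(slice (X := X) s₀)))
  exact congrArg Subtype.val this

theorem quot_sec {u : SuspSpace φ} (hu : u ∈ Quot.mk (suspRel φ) '' slice s₀) :
    Quot.mk (suspRel φ) (sec φ s₀ u) = u := by
  have hu' : u ∈ Set.range (vS φ s₀) := by rw [range_vS]; exact hu
  exact (isOpenEmbedding_vS φ s₀).toOpenPartialHomeomorph_right_inv (f := vS φ s₀) hu'

theorem continuousOn_sec :
    ContinuousOn (sec φ s₀) (Quot.mk (suspRel φ) '' slice s₀) := by
  have h := (Topology.IsOpenEmbedding.toOpenPartialHomeomorph (vS φ s₀)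
    (isOpenEmbedding_vS φ s₀)).symm.continuousOn
  have ht : (Topology.IsOpenEmbedding.toOpenPartialHomeomorph (vS φ s₀)
      (isOpenEmbedding_vS φ s₀)).symm.source = Quot.mk (suspRel φ) '' slice s₀ := by
    rw [OpenPartialHomeomorph.symm_source,
      Topology.IsOpenEmbedding.toOpenPartialHomeomorph_target, range_vS]
  rw [ht] at h
  exact continuous_subtype_val.comp_continuousOn h

/-- The trivialization of the suspension projection at the point `v_φ p₀`. -/
noncomputable def trivAt (p₀ : X × ℝ) : Bundle.Trivialization ℤ (Quot.mk (suspRel φ) : X × ℝ → SuspSpace φ) where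
  baseSet := Quot.mk (suspRel φ) '' slice p₀.2
  open_baseSet := isOpenMap_quot φ _ (isOpen_slice p₀.2)
  source := Quot.mk (suspRel φ) ⁻¹' (Quot.mk (suspRel φ) '' slice p₀.2)
  target := (Quot.mk (suspRel φ) '' slice p₀.2) ×ˢ (Set.univ : Set ℤ)
  toFun p := (Quot.mk (suspRel φ) p, round (p₀.2 - p.2))
  invFun q := suspAct φ q.2 (sec φ p₀.2 q.1)
  source_eq := rfl
  target_eq := rfl
  proj_toFun p _ := rfl
  open_source := (isOpenMap_quot φ _ (isOpen_slice p₀.2)).preimage continuous_quot_mk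
  open_target := (isOpenMap_quot φ _ (isOpen_slice p₀.2)).prod isOpen_univ
  map_source' p hp := ⟨hp, trivial⟩
  map_target' := by
    rintro ⟨u, n⟩ ⟨hu, -⟩
    have h : Quot.mk (suspRel φ) (suspAct φ n (sec φ p₀.2 u))
        ∈ Quot.mk (suspRel φ) '' slice p₀.2 := by
      rw [quot_suspAct, quot_sec φ p₀.2 hu]
      exact hu
    exact h
  left_inv' := by
    intro p hp
    obtain ⟨m, hm⟩ := (mem_image_slice_iff φ p₀.2 p).mp hp
    have hr : round (p₀.2 - p.2) = -m := key_round φ p₀.2 hm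
    show suspAct φ (round (p₀.2 - p.2)) (sec φ p₀.2 (Quot.mk (suspRel φ) p)) = p
    rw [← quot_suspAct φ m p, sec_quot φ p₀.2 hm, hr, suspAct_add, neg_add_cancel, suspAct_zero]
  right_inv' := by
    rintro ⟨u, n⟩ ⟨hu, -⟩
    have h1 : Quot.mk (suspRel φ) (suspAct φ n (sec φ p₀.2 u)) = u := by
      rw [quot_suspAct, quot_sec φ p₀.2 hu]
    have h2 : round (p₀.2 - (suspAct φ n (sec φ p₀.2 u)).2) = n := by
      have hmem := sec_mem φ p₀.2 u
      rw [mem_slice_iff] at hmem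
      have hval : p₀.2 - (suspAct φ n (sec φ p₀.2 u)).2
          = (p₀.2 - (sec φ p₀.2 u).2) + n := by
        show p₀.2 - ((sec φ p₀.2 u).2 - n) = _
        ring
      rw [hval, round_add_intCast]
      have : round (p₀.2 - (sec φ p₀.2 u).2) = 0 := by
        rw [round_eq_zero_iff]
        constructor
        · norm_num; linarith [hmem.2]
        · norm_num; linarith [hmem.1]
      rw [this, zero_add]
    exact Prod.ext h1 h2
  continuousOn_toFun := by
    apply ContinuousOn.prodMk continuous_quot_mk.continuousOn
    intro p hp
    apply ContinuousAt.continuousWithinAt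
    obtain ⟨m, hm⟩ := (mem_image_slice_iff φ p₀.2 p).mp hp
    have hWopen : IsOpen {q : X × ℝ |
        p₀.2 - q.2 ∈ Set.Ioo (((-m : ℤ) : ℝ) - 2⁻¹) (((-m : ℤ) : ℝ) + 2⁻¹)} :=
      isOpen_Ioo.preimage (continuous_const.sub continuous_snd)
    have hpW : p ∈ {q : X × ℝ |
        p₀.2 - q.2 ∈ Set.Ioo (((-m : ℤ) : ℝ) - 2⁻¹) (((-m : ℤ) : ℝ) + 2⁻¹)} := by
      rw [mem_slice_iff] at hm
      have hm2 : p₀.2 - 2⁻¹ < p.2 - m ∧ p.2 - m < p₀.2 + 2⁻¹ := hm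
      constructor <;> push_cast <;> [linarith [hm2.2]; linarith [hm2.1]]
    exact continuousAt_const.congr <| Filter.eventuallyEq_of_mem (hWopen.mem_nhds hpW)
      fun q hq => (round_eq_of hq).symm
  continuousOn_invFun := by
    rintro ⟨u, n⟩ ⟨hu, -⟩
    apply ContinuousAt.continuousWithinAt
    have h0 : ContinuousAt (sec φ p₀.2) u :=
      (continuousOn_sec φ p₀.2).continuousAt
        ((isOpenMap_quot φ _ (isOpen_slice p₀.2)).mem_nhds hu)
    have hsec : ContinuousAt (fun r : SuspSpace φ × ℤ => sec φ p₀.2 r.1) (u, n) :=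
      ContinuousAt.comp (g := sec φ p₀.2) (f := Prod.fst) h0 continuousAt_fst
    have h1 : ContinuousAt (fun r : SuspSpace φ × ℤ => suspAct φ n (sec φ p₀.2 r.1)) (u, n) :=
      ((actHomeo φ n).continuous.continuousAt).comp hsec
    have hev : ∀ᶠ r : SuspSpace φ × ℤ in nhds (u, n), r.2 = n := by
      have : IsOpen {r : SuspSpace φ × ℤ | r.2 = n} :=
        (isOpen_discrete ({n} : Set ℤ)).preimage continuous_snd
      exact this.mem_nhds rfl
    exact h1.congr (hev.mono fun r hr => by
      show suspAct φ n (sec φ p₀.2 r.1) = suspAct φ r.2 (sec φ p₀.2 r.1)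
      rw [hr])

theorem mem_baseSet_trivAt (p₀ : X × ℝ) :
    Quot.mk (suspRel φ) p₀ ∈ (trivAt φ p₀).baseSet := by
  refine ⟨p₀, ?_, rfl⟩
  rw [mem_slice_iff]
  constructor <;> norm_num

end Triv


end SuspAux

/-- The natural projection `v_φ : X × ℝ → (X × ℝ)/ℤ` onto the orbit space of the
action `n · (x, s) = (φⁿ(x), s − n)` is a covering map. -/
theorem suspension_projection_is_covering_map
    {X : Type*} [TopologicalSpace X] (φ : X ≃ₜ X) :
    IsCoveringMap (Quot.mk (suspRel φ) : X × ℝ → SuspSpace φ) := by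
  intro b
  obtain ⟨p₀, rfl⟩ := Quot.exists_rep b
  haveI : Nonempty X := ⟨p₀.1⟩
  exact IsEvenlyCovered.to_isEvenlyCovered_preimage
    (IsEvenlyCovered.of_trivialization (t := SuspAux.trivAt φ p₀) (SuspAux.mem_baseSet_trivAt φ p₀))
end
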